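/- (Averaged per-iteration decrease of decentralized Frank-Wolfe, eq. (expe).) Fix γ ∈ [0,1] and α ∈ M. For each k ∈ {1,…,K}, let s_k ∈ argmin_{‖s‖₁ ≤ β} ⟨s, ∇_k f(α)⟩ and let α̂^(k) be the vector equal to α except that its k-th block is replaced by (1 − γ)α_k + γ s_k. Define gap_k(α) = max_{‖s‖₁ ≤ β} ⟨α_k − s, ∇_k f(α)⟩ and gap(α) = Σ_{k=1}^K gap_k(α). Then, with C_k = 4β²·d_k(w)·( c_k·‖A_k‖₁² + μ₁ ) and C⊗ = Σ_{k=1}^K C_k, (1/K)·Σ_{k=1}^K f(α̂^(k)) ≤ f(α) − (γ/K)·gap(α) + γ²·C⊗/(2K). -/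

import Mathlib

open scoped RealInnerProductSpace BigOperators

abbrev Vec (n : ℕ) := EuclideanSpace ℝ (Fin n)

/-- Degree of user `k`: `d_k(w) = Σ_{l≠k} w_{k,l}`. -/
def degW {K : ℕ} (W : Fin K → Fin K → ℝ) (k : Fin K) : ℝ :=
  ∑ l ∈ Finset.univ.filter (fun l => l ≠ k), W k l

/-- The boosting objective
`f(α) = Σ_k d_k(w) c_k log(Σ_i exp(−(A_k α_k)_i)) + (μ₁/2) Σ_{k<l} w_{k,l} ‖α_k − α_l‖²`. -/
noncomputable def fObj {K n : ℕ} {m : Fin K → ℕ}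
    (A : ∀ k, Matrix (Fin (m k)) (Fin n) ℝ) (c : Fin K → ℝ)
    (W : Fin K → Fin K → ℝ) (μ₁ : ℝ) (α : Fin K → Vec n) : ℝ :=
  (∑ k, degW W k * c k *
      Real.log (∑ i, Real.exp (-(Matrix.mulVec (A k) (α k) i))))
    + μ₁ / 2 * ∑ k, ∑ l ∈ Finset.univ.filter (fun l => k < l),
        W k l * ‖α k - α l‖ ^ 2

/-- The partial gradient `∇_k f(α)` of `f` with respect to the block `α_k`. -/
noncomputable def gradBlk {K n : ℕ} (f : (Fin K → Vec n) → ℝ)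
    (α : Fin K → Vec n) (k : Fin K) : Vec n :=
  gradient (fun x => f (Function.update α k x)) (α k)

/-- `‖A‖₁`: the maximum ℓ1 norm of a row of `A`. -/
noncomputable def rowNormOne {m n : ℕ} (A : Matrix (Fin m) (Fin n) ℝ) : ℝ :=
  ⨆ i, ∑ j, |A i j|

/-- The ℓ1 norm on `ℝ^n`. -/
def l1Norm {n : ℕ} (x : Vec n) : ℝ := ∑ j, |x j|

/-- The blockwise Frank-Wolfe surrogate gap
`gap_k(α) = max_{‖s‖₁ ≤ β} ⟨α_k − s, ∇_k f(α)⟩`. -/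
noncomputable def blockGap {n : ℕ} (β : ℝ) (x g : Vec n) : ℝ :=
  sSup {v : ℝ | ∃ s : Vec n, l1Norm s ≤ β ∧ v = ⟪x - s, g⟫}

/-! ### Auxiliary one-dimensional lemmas for the log-sum-exp function -/

namespace FWaux

variable {m : ℕ}

noncomputable def S (w b : Fin m → ℝ) (t : ℝ) : ℝ := ∑ i, w i * Real.exp (t * b i)
noncomputable def S1 (w b : Fin m → ℝ) (t : ℝ) : ℝ := ∑ i, (w i * b i) * Real.exp (t * b i)
noncomputable def S2 (w b : Fin m → ℝ) (t : ℝ) : ℝ := ∑ i, (w i * b i ^ 2) * Real.exp (t * b i)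

lemma hasDerivAt_S (w b : Fin m → ℝ) (t : ℝ) : HasDerivAt (S w b) (S1 w b t) t := by
  apply HasDerivAt.fun_sum; intro i _
  have h1 : HasDerivAt (fun t : ℝ => t * b i) (b i) t := hasDerivAt_mul_const (b i)
  have h2 := (h1.exp).const_mul (w i)
  exact h2.congr_deriv (by ring)

lemma hasDerivAt_S1 (w b : Fin m → ℝ) (t : ℝ) : HasDerivAt (S1 w b) (S2 w b t) t := by
  apply HasDerivAt.fun_sum; intro i _
  have h1 : HasDerivAt (fun t : ℝ => t * b i) (b i) t := hasDerivAt_mul_const (b i)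
  have h2 := (h1.exp).const_mul (w i * b i)
  exact h2.congr_deriv (by ring)

lemma S_pos (w b : Fin m → ℝ) (hm : 0 < m) (hw : ∀ i, 0 < w i) (t : ℝ) : 0 < S w b t := by
  have : Nonempty (Fin m) := Fin.pos_iff_nonempty.mp hm
  exact Finset.sum_pos (fun i _ => mul_pos (hw i) (Real.exp_pos _)) Finset.univ_nonempty

lemma lse_taylor (w b : Fin m → ℝ) (hw : ∀ i, 0 < w i) (B : ℝ) (hb : ∀ i, |b i| ≤ B)
    (γ : ℝ) (hγ : 0 ≤ γ) :
    Real.log (S w b γ) ≤ Real.log (S w b 0) + γ * (S1 w b 0 / S w b 0) + γ ^ 2 * B ^ 2 / 2 := by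
  rcases Nat.eq_zero_or_pos m with hm | hm
  · subst hm
    simp only [S, S1, Finset.univ_eq_empty, Finset.sum_empty, Real.log_zero, zero_div, mul_zero,
      add_zero, zero_add]
    positivity
  · have hSpos := S_pos w b hm hw
    have hSne : ∀ t, S w b t ≠ 0 := fun t => (hSpos t).ne'
    set φ' : ℝ → ℝ := fun t => S1 w b t / S w b t with hφ'def
    have hφ : ∀ t, HasDerivAt (fun t => Real.log (S w b t)) (φ' t) t :=
      fun t => (hasDerivAt_S w b t).log (hSne t)
    have hφ' : ∀ t, HasDerivAt φ'
        ((S2 w b t * S w b t - S1 w b t * S1 w b t) / (S w b t) ^ 2) t :=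
      fun t => (hasDerivAt_S1 w b t).div (hasDerivAt_S w b t) (hSne t)
    have hcurv : ∀ t, (S2 w b t * S w b t - S1 w b t * S1 w b t) / (S w b t) ^ 2 ≤ B ^ 2 := by
      intro t
      have h2 : S2 w b t ≤ B ^ 2 * S w b t := by
        rw [S2, S, Finset.mul_sum]
        apply Finset.sum_le_sum
        intro i _
        have : b i ^ 2 ≤ B ^ 2 := by
          have := hb i
          nlinarith [abs_nonneg (b i), sq_abs (b i)]
        have hnn : 0 ≤ (B ^ 2 - b i ^ 2) * (w i * Real.exp (t * b i)) :=
          mul_nonneg (sub_nonneg.mpr this) (mul_pos (hw i) (Real.exp_pos _)).le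
        nlinarith [hnn]
      rw [div_le_iff₀ (pow_pos (hSpos t) 2)]
      nlinarith [sq_nonneg (S1 w b t), hSpos t]
    set ψ' : ℝ → ℝ := fun t => S1 w b 0 / S w b 0 + t * B ^ 2 - S1 w b t / S w b t with hψ'def
    have hψ' : ∀ t, HasDerivAt ψ'
        (B ^ 2 - (S2 w b t * S w b t - S1 w b t * S1 w b t) / (S w b t) ^ 2) t := by
      intro t
      have := ((hasDerivAt_const t (S1 w b 0 / S w b 0)).add
        (hasDerivAt_mul_const (B ^ 2))).sub (hφ' t)
      exact this.congr_deriv (by ring)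
    have mono1 : Monotone ψ' :=
      monotone_of_deriv_nonneg (fun t => (hψ' t).differentiableAt)
        (fun t => by rw [(hψ' t).deriv]; linarith [hcurv t])
    have hψ'0 : ψ' 0 = 0 := by simp [hψ'def]
    set ψ : ℝ → ℝ := fun t => Real.log (S w b 0) + t * (S1 w b 0 / S w b 0) + t ^ 2 * B ^ 2 / 2
        - Real.log (S w b t) with hψdef
    have hψ : ∀ t, HasDerivAt ψ (ψ' t) t := by
      intro t
      have h1 : HasDerivAt (fun t : ℝ => t ^ 2 * B ^ 2 / 2) (t * B ^ 2) t := by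
        have h1' := (hasDerivAt_pow 2 t).mul_const (B ^ 2 / 2)
        have he : (fun t : ℝ => t ^ 2 * B ^ 2 / 2) = fun x : ℝ => x ^ 2 * (B ^ 2 / 2) := by
          funext x; ring
        rw [he]
        exact h1'.congr_deriv (by push_cast; ring)
      have := (((hasDerivAt_const t (Real.log (S w b 0))).add
        (hasDerivAt_mul_const (S1 w b 0 / S w b 0))).add h1).sub (hφ t)
      refine this.congr_deriv ?_
      simp only [hψ'def, hφ'def]
      ring
    have mono2 : MonotoneOn ψ (Set.Ici (0 : ℝ)) := by
      apply monotoneOn_of_deriv_nonneg (convex_Ici 0)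
        (fun t _ => ((hψ t).differentiableAt).continuousAt.continuousWithinAt)
        (fun t _ => ((hψ t).differentiableAt).differentiableWithinAt)
      intro t ht
      rw [interior_Ici] at ht
      rw [(hψ t).deriv]
      calc (0:ℝ) = ψ' 0 := hψ'0.symm
        _ ≤ ψ' t := mono1 (le_of_lt ht)
    have h0 : ψ 0 = 0 := by simp [hψdef]
    have := mono2 (Set.self_mem_Ici) (Set.mem_Ici.mpr hγ) hγ
    rw [h0] at this
    simp only [hψdef] at this
    linarith

lemma lse_hasDerivAt0 (w b : Fin m → ℝ) (hw : ∀ i, 0 < w i) :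
    HasDerivAt (fun t => Real.log (S w b t)) (S1 w b 0 / S w b 0) 0 := by
  rcases Nat.eq_zero_or_pos m with hm | hm
  · subst hm
    have h1 : (fun t => Real.log (S w b t)) = fun _ : ℝ => Real.log 0 := by
      funext t; simp [S]
    have h2 : S1 w b 0 / S w b 0 = 0 := by simp [S, S1]
    rw [h1, h2]; exact hasDerivAt_const _ _
  · exact (hasDerivAt_S w b 0).log (S_pos w b hm hw 0).ne'

end FWaux

/-! ### Multivariate auxiliary lemmas -/

lemma mulVec_line {mm n : ℕ} (M : Matrix (Fin mm) (Fin n) ℝ) (x u : Vec n) (t : ℝ) (i : Fin mm) :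
    Matrix.mulVec M (x + t • u) i = Matrix.mulVec M x i + t * Matrix.mulVec M u i := by
  simp only [Matrix.mulVec, dotProduct, PiLp.add_apply, PiLp.smul_apply, Pi.add_apply, Pi.smul_apply, smul_eq_mul,
    mul_add, Finset.sum_add_distrib, Finset.mul_sum]
  congr 1
  exact Finset.sum_congr rfl (fun j _ => by ring)

lemma diff_lse {mm n : ℕ} (M : Matrix (Fin mm) (Fin n) ℝ) :
    Differentiable ℝ (fun x : Vec n => Real.log (∑ i, Real.exp (-(Matrix.mulVec M x i)))) := by
  rcases Nat.eq_zero_or_pos mm with h | h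
  · subst h
    simp only [Finset.univ_eq_empty, Finset.sum_empty]
    exact differentiable_const _
  · have hlin : ∀ i, Differentiable ℝ (fun x : Vec n => Matrix.mulVec M x i) := by
      intro i
      have he : (fun x : Vec n => Matrix.mulVec M x i) = fun x : Vec n => ∑ j, M i j * x j := by
        funext x; simp [Matrix.mulVec, dotProduct]
      rw [he]
      exact Differentiable.fun_sum (fun j _ =>
        ((EuclideanSpace.proj j : Vec n →L[ℝ] ℝ).differentiable).const_mul (M i j))
    have hS : Differentiable ℝ (fun x : Vec n => ∑ i, Real.exp (-(Matrix.mulVec M x i))) :=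
      Differentiable.fun_sum (fun i _ => ((hlin i).neg).exp)
    refine Differentiable.log hS ?_
    intro x
    have : Nonempty (Fin mm) := Fin.pos_iff_nonempty.mp h
    exact (Finset.sum_pos (fun i _ => Real.exp_pos _) Finset.univ_nonempty).ne'

lemma quad_line_sum {n : ℕ} {ι : Type*} (T : Finset ι) (ω : ι → ℝ) (v : ι → Vec n) (u : Vec n) (t : ℝ) :
    ∑ l ∈ T, ω l * ‖v l + t • u‖ ^ 2
      = (∑ l ∈ T, ω l * ‖v l‖ ^ 2) + 2 * (∑ l ∈ T, ω l * ⟪v l, u⟫) * t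
        + (∑ l ∈ T, ω l) * ‖u‖ ^ 2 * t ^ 2 := by
  have hterm : ∀ l ∈ T, ω l * ‖v l + t • u‖ ^ 2
      = ω l * ‖v l‖ ^ 2 + 2 * (ω l * ⟪v l, u⟫) * t + ω l * ‖u‖ ^ 2 * t ^ 2 := by
    intro l _
    have h1 : ‖v l + t • u‖ ^ 2 = ‖v l‖ ^ 2 + 2 * ⟪v l, t • u⟫ + ‖t • u‖ ^ 2 :=
      norm_add_sq_real (v l) (t • u)
    have h2 : ⟪v l, t • u⟫ = t * ⟪v l, u⟫ := real_inner_smul_right _ _ _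
    have h3 : ‖t • u‖ ^ 2 = t ^ 2 * ‖u‖ ^ 2 := by
      rw [norm_smul, mul_pow, Real.norm_eq_abs, sq_abs]
    rw [h1, h2, h3]; ring
  rw [Finset.sum_congr rfl hterm]
  simp only [Finset.sum_add_distrib, ← Finset.sum_mul, ← Finset.mul_sum]

lemma fObj_update_eq {K n : ℕ} {m : Fin K → ℕ}
    (A : ∀ k, Matrix (Fin (m k)) (Fin n) ℝ) (c : Fin K → ℝ)
    (W : Fin K → Fin K → ℝ) (μ₁ : ℝ) (α : Fin K → Vec n) (k : Fin K) (x : Vec n) :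
    fObj A c W μ₁ (Function.update α k x)
      = (degW W k * c k * Real.log (∑ i, Real.exp (-(Matrix.mulVec (A k) x i)))
          + μ₁ / 2 * ((∑ l ∈ Finset.univ.filter (fun l => k < l), W k l * ‖x - α l‖ ^ 2)
            + ∑ l ∈ Finset.univ.filter (fun l => l < k), W l k * ‖α l - x‖ ^ 2))
        + ((∑ l ∈ Finset.univ.erase k, degW W l * c l *
              Real.log (∑ i, Real.exp (-(Matrix.mulVec (A l) (α l) i))))
          + μ₁ / 2 * ∑ p ∈ Finset.univ.erase k,
              ∑ q ∈ (Finset.univ.filter (fun q => p < q)).erase k, W p q * ‖α p - α q‖ ^ 2) := by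
  unfold fObj
  have hupk : Function.update α k x k = x := Function.update_self k x α
  have hne : ∀ l, l ≠ k → Function.update α k x l = α l := fun l h => Function.update_of_ne h x α
  have h1 : (∑ l, degW W l * c l *
        Real.log (∑ i, Real.exp (-(Matrix.mulVec (A l) (Function.update α k x l) i))))
      = degW W k * c k * Real.log (∑ i, Real.exp (-(Matrix.mulVec (A k) x i)))
        + ∑ l ∈ Finset.univ.erase k, degW W l * c l *
            Real.log (∑ i, Real.exp (-(Matrix.mulVec (A l) (α l) i))) := by
    rw [← Finset.add_sum_erase _ _ (Finset.mem_univ k), hupk]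
    congr 1
    refine Finset.sum_congr rfl ?_
    intro l hl
    rw [hne l (Finset.ne_of_mem_erase hl)]
  have h2 : (∑ p, ∑ q ∈ Finset.univ.filter (fun q => p < q),
        W p q * ‖Function.update α k x p - Function.update α k x q‖ ^ 2)
      = ((∑ l ∈ Finset.univ.filter (fun l => k < l), W k l * ‖x - α l‖ ^ 2)
          + ∑ l ∈ Finset.univ.filter (fun l => l < k), W l k * ‖α l - x‖ ^ 2)
        + ∑ p ∈ Finset.univ.erase k, ∑ q ∈ (Finset.univ.filter (fun q => p < q)).erase k,
            W p q * ‖α p - α q‖ ^ 2 := by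
    rw [← Finset.add_sum_erase _ _ (Finset.mem_univ k)]
    have hk : (∑ q ∈ Finset.univ.filter (fun q => k < q),
        W k q * ‖Function.update α k x k - Function.update α k x q‖ ^ 2)
        = ∑ l ∈ Finset.univ.filter (fun l => k < l), W k l * ‖x - α l‖ ^ 2 := by
      refine Finset.sum_congr rfl ?_
      intro q hq
      have hlt : k < q := (Finset.mem_filter.mp hq).2
      rw [hupk, hne q (ne_of_gt hlt)]
    have hrest : ∀ p ∈ Finset.univ.erase k,
        (∑ q ∈ Finset.univ.filter (fun q => p < q),
            W p q * ‖Function.update α k x p - Function.update α k x q‖ ^ 2)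
        = (if p < k then W p k * ‖α p - x‖ ^ 2 else 0)
          + ∑ q ∈ (Finset.univ.filter (fun q => p < q)).erase k, W p q * ‖α p - α q‖ ^ 2 := by
      intro p hp
      have hpk : p ≠ k := Finset.ne_of_mem_erase hp
      by_cases hpk' : p < k
      · have hkmem : k ∈ Finset.univ.filter (fun q => p < q) := by simp [hpk']
        rw [← Finset.add_sum_erase _ _ hkmem, if_pos hpk']
        congr 1
        · rw [hne p hpk, hupk]
        · refine Finset.sum_congr rfl ?_
          intro q hq
          rw [hne p hpk, hne q (Finset.ne_of_mem_erase hq)]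
      · have hknot : k ∉ Finset.univ.filter (fun q => p < q) := by simp [hpk']
        rw [if_neg hpk', zero_add, Finset.erase_eq_of_notMem hknot]
        refine Finset.sum_congr rfl ?_
        intro q hq
        have hqk : q ≠ k := fun h => hknot (h ▸ hq)
        rw [hne p hpk, hne q hqk]
    rw [Finset.sum_congr rfl hrest, Finset.sum_add_distrib, hk]
    have hif : (∑ p ∈ Finset.univ.erase k, if p < k then W p k * ‖α p - x‖ ^ 2 else 0)
        = ∑ l ∈ Finset.univ.filter (fun l => l < k), W l k * ‖α l - x‖ ^ 2 := by
      rw [← Finset.sum_filter]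
      apply Finset.sum_congr
      · ext p
        simp only [Finset.mem_filter, Finset.mem_erase, Finset.mem_univ, true_and, and_true]
        exact ⟨fun h => h.2, fun h => ⟨ne_of_lt h, h⟩⟩
      · intros; rfl
    rw [hif]; ring
  rw [h1, h2]; ring

lemma key_block
    {K n : ℕ} {m : Fin K → ℕ}
    (A : ∀ k, Matrix (Fin (m k)) (Fin n) ℝ)
    (c : Fin K → ℝ) (hc : ∀ k, 0 ≤ c k)
    (W : Fin K → Fin K → ℝ) (hWsym : ∀ k l, W k l = W l k)
    (hWnn : ∀ k l, k ≠ l → 0 ≤ W k l)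
    (μ₁ : ℝ) (hμ₁ : 0 ≤ μ₁) (β : ℝ) (hβ : 0 < β)
    (γ : ℝ) (hγ0 : 0 ≤ γ)
    (α : Fin K → Vec n) (hα : ∀ j, l1Norm (α j) ≤ β)
    (s : Fin K → Vec n) (hs : ∀ k, l1Norm (s k) ≤ β)
    (k : Fin K)
    (hargmin : ∀ s' : Vec n, l1Norm s' ≤ β →
      ⟪s k, gradBlk (fObj A c W μ₁) α k⟫ ≤ ⟪s', gradBlk (fObj A c W μ₁) α k⟫) :
    fObj A c W μ₁ (Function.update α k ((1 - γ) • α k + γ • s k))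
      ≤ fObj A c W μ₁ α
        - γ * blockGap β (α k) (gradBlk (fObj A c W μ₁) α k)
        + γ ^ 2 * (4 * β ^ 2 * degW W k * (c k * rowNormOne (A k) ^ 2 + μ₁)) / 2 := by
  set g : Vec n := gradBlk (fObj A c W μ₁) α k with hg
  set u : Vec n := s k - α k with hu
  set P : Finset (Fin K) := Finset.univ.filter (fun l => k < l) with hPdef
  set N : Finset (Fin K) := Finset.univ.filter (fun l => l < k) with hNdef
  set wf : Fin (m k) → ℝ := fun i => Real.exp (-(Matrix.mulVec (A k) (α k) i)) with hwf
  set bf : Fin (m k) → ℝ := fun i => -(Matrix.mulVec (A k) u i) with hbf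
  set Ek : Vec n → ℝ := fun x =>
      degW W k * c k * Real.log (∑ i, Real.exp (-(Matrix.mulVec (A k) x i)))
        + μ₁ / 2 * ((∑ l ∈ P, W k l * ‖x - α l‖ ^ 2)
            + ∑ l ∈ N, W l k * ‖α l - x‖ ^ 2) with hEkdef
  set Rk : ℝ := (∑ l ∈ Finset.univ.erase k, degW W l * c l *
        Real.log (∑ i, Real.exp (-(Matrix.mulVec (A l) (α l) i))))
      + μ₁ / 2 * ∑ p ∈ Finset.univ.erase k,
          ∑ q ∈ (Finset.univ.filter (fun q => p < q)).erase k, W p q * ‖α p - α q‖ ^ 2 with hRkdef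
  have hdec : ∀ x : Vec n, fObj A c W μ₁ (Function.update α k x) = Ek x + Rk := by
    intro x
    simp only [hEkdef, hRkdef, hPdef, hNdef]
    exact fObj_update_eq A c W μ₁ α k x
  -- basic facts about u
  have hw : ∀ i, 0 < wf i := by
    intro i; simp only [hwf]; exact Real.exp_pos _
  have hl1nn : 0 ≤ l1Norm u := Finset.sum_nonneg (fun j _ => abs_nonneg _)
  have hl1u : l1Norm u ≤ 2 * β := by
    have hterm : ∀ j, |u j| ≤ |s k j| + |α k j| := by
      intro j
      have : u j = s k j - α k j := rfl
      rw [this, sub_eq_add_neg]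
      calc |s k j + -(α k j)| ≤ |s k j| + |-(α k j)| := abs_add_le _ _
        _ = |s k j| + |α k j| := by rw [abs_neg]
    have h1 : l1Norm u ≤ (∑ j, |s k j|) + ∑ j, |α k j| := by
      unfold l1Norm
      rw [← Finset.sum_add_distrib]
      exact Finset.sum_le_sum (fun j _ => hterm j)
    have h2 := hs k
    have h3 := hα k
    unfold l1Norm at h2 h3
    linarith
  have hnormu2 : ‖u‖ ^ 2 ≤ (2 * β) ^ 2 := by
    have h1 : ‖u‖ ^ 2 = ∑ j, |u j| ^ 2 := by
      rw [EuclideanSpace.norm_eq, Real.sq_sqrt (Finset.sum_nonneg fun j _ => sq_nonneg _)]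
      simp [Real.norm_eq_abs]
    have h2 : (∑ j, |u j| ^ 2) ≤ (∑ j, |u j|) ^ 2 :=
      Finset.sum_sq_le_sq_sum_of_nonneg (fun j _ => abs_nonneg _)
    have h3 : (∑ j, |u j|) ^ 2 ≤ (2 * β) ^ 2 := by
      apply pow_le_pow_left₀ hl1nn hl1u
    calc ‖u‖ ^ 2 = ∑ j, |u j| ^ 2 := h1
      _ ≤ (∑ j, |u j|) ^ 2 := h2
      _ ≤ (2 * β) ^ 2 := h3
  have hrownn : 0 ≤ rowNormOne (A k) := by
    unfold rowNormOne
    exact Real.iSup_nonneg fun i => Finset.sum_nonneg (fun j _ => abs_nonneg _)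
  have hbB : ∀ i, |bf i| ≤ 2 * β * rowNormOne (A k) := by
    intro i
    have hrow : (∑ j, |A k i j|) ≤ rowNormOne (A k) := by
      unfold rowNormOne
      exact le_ciSup (f := fun i => ∑ j, |A k i j|) (Set.Finite.bddAbove (Set.finite_range _)) i
    have hrsnn : 0 ≤ ∑ j, |A k i j| := Finset.sum_nonneg (fun j _ => abs_nonneg _)
    simp only [hbf, abs_neg]
    calc |Matrix.mulVec (A k) u i| = |∑ j, A k i j * u j| := by
          simp [Matrix.mulVec, dotProduct]
      _ ≤ ∑ j, |A k i j * u j| := Finset.abs_sum_le_sum_abs _ _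
      _ = ∑ j, |A k i j| * |u j| := by simp [abs_mul]
      _ ≤ ∑ j, |A k i j| * l1Norm u := by
          apply Finset.sum_le_sum
          intro j _
          apply mul_le_mul_of_nonneg_left _ (abs_nonneg _)
          exact Finset.single_le_sum (fun j' _ => abs_nonneg (u j')) (Finset.mem_univ j)
      _ = (∑ j, |A k i j|) * l1Norm u := (Finset.sum_mul _ _ _).symm
      _ ≤ rowNormOne (A k) * (2 * β) := mul_le_mul hrow hl1u hl1nn hrownn
      _ = 2 * β * rowNormOne (A k) := by ring
  have hd0 : 0 ≤ degW W k := by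
    unfold degW
    exact Finset.sum_nonneg fun l hl => hWnn k l (Ne.symm (Finset.mem_filter.mp hl).2)
  have hQC : ((∑ l ∈ P, W k l) + ∑ l ∈ N, W l k) = degW W k := by
    have hsymm : (∑ l ∈ N, W l k) = ∑ l ∈ N, W k l :=
      Finset.sum_congr rfl (fun l _ => hWsym l k)
    have hunion : Finset.univ.filter (fun l => l ≠ k) = N ∪ P := by
      ext l
      simp only [hPdef, hNdef, Finset.mem_union, Finset.mem_filter, Finset.mem_univ, true_and]
      exact ne_iff_lt_or_gt
    have hdisj : Disjoint N P := by
      rw [Finset.disjoint_left]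
      intro a haN haP
      simp only [hNdef, Finset.mem_filter, Finset.mem_univ, true_and] at haN
      simp only [hPdef, Finset.mem_filter, Finset.mem_univ, true_and] at haP
      exact absurd haP (not_lt_of_gt haN)
    unfold degW
    rw [hsymm, hunion, Finset.sum_union hdisj]
    ring
  -- the one-dimensional restriction of Ek
  have hEkline : ∀ t : ℝ, Ek (α k + t • u)
      = degW W k * c k * Real.log (FWaux.S wf bf t)
        + μ₁ / 2 * (((∑ l ∈ P, W k l * ‖α k - α l‖ ^ 2) + ∑ l ∈ N, W l k * ‖α k - α l‖ ^ 2)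
          + 2 * ((∑ l ∈ P, W k l * ⟪α k - α l, u⟫) + ∑ l ∈ N, W l k * ⟪α k - α l, u⟫) * t
          + ((∑ l ∈ P, W k l) + ∑ l ∈ N, W l k) * ‖u‖ ^ 2 * t ^ 2) := by
    intro t
    simp only [hEkdef]
    have hlog : (∑ i, Real.exp (-(Matrix.mulVec (A k) (α k + t • u) i))) = FWaux.S wf bf t := by
      unfold FWaux.S
      refine Finset.sum_congr rfl ?_
      intro i _
      rw [mulVec_line]
      have hsplit : -(Matrix.mulVec (A k) (α k) i + t * Matrix.mulVec (A k) u i)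
          = -(Matrix.mulVec (A k) (α k) i) + t * -(Matrix.mulVec (A k) u i) := by ring
      rw [hsplit, Real.exp_add]
    have hP : (∑ l ∈ P, W k l * ‖(α k + t • u) - α l‖ ^ 2)
        = ∑ l ∈ P, W k l * ‖(α k - α l) + t • u‖ ^ 2 :=
      Finset.sum_congr rfl (fun l _ => by
        rw [show (α k + t • u) - α l = (α k - α l) + t • u by abel])
    have hN : (∑ l ∈ N, W l k * ‖α l - (α k + t • u)‖ ^ 2)
        = ∑ l ∈ N, W l k * ‖(α k - α l) + t • u‖ ^ 2 :=
      Finset.sum_congr rfl (fun l _ => by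
        rw [norm_sub_rev, show (α k + t • u) - α l = (α k - α l) + t • u by abel])
    simp only [WithLp.ofLp_add, WithLp.ofLp_smul]
    rw [hlog, hP, hN, quad_line_sum P (fun l => W k l) (fun l => α k - α l) u t,
        quad_line_sum N (fun l => W l k) (fun l => α k - α l) u t]
    ring
  -- the inequality part
  have hlse := FWaux.lse_taylor wf bf hw (2 * β * rowNormOne (A k)) hbB γ hγ0
  set X : ℝ := degW W k * c k * (FWaux.S1 wf bf 0 / FWaux.S wf bf 0)
      + μ₁ * ((∑ l ∈ P, W k l * ⟪α k - α l, u⟫) + ∑ l ∈ N, W l k * ⟪α k - α l, u⟫) with hX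
  have hIneq : Ek (α k + γ • u) ≤ Ek (α k) + γ * X
      + γ ^ 2 * (4 * β ^ 2 * degW W k * (c k * rowNormOne (A k) ^ 2 + μ₁)) / 2 := by
    have e1 := hEkline γ
    have e0 := hEkline 0
    rw [show α k + (0:ℝ) • u = α k by simp] at e0
    have hdc : 0 ≤ degW W k * c k := mul_nonneg hd0 (hc k)
    have h1 : degW W k * c k * Real.log (FWaux.S wf bf γ)
        ≤ degW W k * c k * (Real.log (FWaux.S wf bf 0)
            + γ * (FWaux.S1 wf bf 0 / FWaux.S wf bf 0)
            + γ ^ 2 * (2 * β * rowNormOne (A k)) ^ 2 / 2) :=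
      mul_le_mul_of_nonneg_left hlse hdc
    have h2 : ((∑ l ∈ P, W k l) + ∑ l ∈ N, W l k) * ‖u‖ ^ 2 * γ ^ 2
        ≤ degW W k * (2 * β) ^ 2 * γ ^ 2 := by
      rw [hQC]
      exact mul_le_mul_of_nonneg_right (mul_le_mul_of_nonneg_left hnormu2 hd0) (sq_nonneg γ)
    have h2' : μ₁ / 2 * (((∑ l ∈ P, W k l) + ∑ l ∈ N, W l k) * ‖u‖ ^ 2 * γ ^ 2)
        ≤ μ₁ / 2 * (degW W k * (2 * β) ^ 2 * γ ^ 2) :=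
      mul_le_mul_of_nonneg_left h2 (by linarith)
    rw [e1, e0, hX]
    linarith [h1, h2']
  -- derivative of the one-dimensional restriction
  have hlse0 := FWaux.lse_hasDerivAt0 wf bf hw
  have hEkDeriv : HasDerivAt (fun t : ℝ => Ek (α k + t • u)) X 0 := by
    have hfun : (fun t : ℝ => Ek (α k + t • u))
        = fun t => degW W k * c k * Real.log (FWaux.S wf bf t)
          + μ₁ / 2 * (((∑ l ∈ P, W k l * ‖α k - α l‖ ^ 2) + ∑ l ∈ N, W l k * ‖α k - α l‖ ^ 2)
            + 2 * ((∑ l ∈ P, W k l * ⟪α k - α l, u⟫) + ∑ l ∈ N, W l k * ⟪α k - α l, u⟫) * t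
            + ((∑ l ∈ P, W k l) + ∑ l ∈ N, W l k) * ‖u‖ ^ 2 * t ^ 2) := funext hEkline
    rw [hfun]
    have hlin : HasDerivAt (fun t : ℝ =>
        2 * ((∑ l ∈ P, W k l * ⟪α k - α l, u⟫) + ∑ l ∈ N, W l k * ⟪α k - α l, u⟫) * t)
        (2 * ((∑ l ∈ P, W k l * ⟪α k - α l, u⟫) + ∑ l ∈ N, W l k * ⟪α k - α l, u⟫)) 0 := by
      simpa using (hasDerivAt_id (0:ℝ)).const_mul
        (2 * ((∑ l ∈ P, W k l * ⟪α k - α l, u⟫) + ∑ l ∈ N, W l k * ⟪α k - α l, u⟫))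
    have hsq : HasDerivAt (fun t : ℝ =>
        ((∑ l ∈ P, W k l) + ∑ l ∈ N, W l k) * ‖u‖ ^ 2 * t ^ 2) 0 0 := by
      have := (hasDerivAt_pow 2 (0:ℝ)).const_mul (((∑ l ∈ P, W k l) + ∑ l ∈ N, W l k) * ‖u‖ ^ 2)
      exact this.congr_deriv (by push_cast; ring)
    have hpoly := ((hasDerivAt_const (0:ℝ)
        ((∑ l ∈ P, W k l * ‖α k - α l‖ ^ 2) + ∑ l ∈ N, W l k * ‖α k - α l‖ ^ 2)).add
        hlin).add hsq
    have := (hlse0.const_mul (degW W k * c k)).add (hpoly.const_mul (μ₁ / 2))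
    refine this.congr_deriv ?_
    rw [hX]; ring
  -- identify X with the inner product of the gradient with u
  have hdiff : DifferentiableAt ℝ (fun x : Vec n => fObj A c W μ₁ (Function.update α k x)) (α k) := by
    have hfun : (fun x : Vec n => fObj A c W μ₁ (Function.update α k x)) = fun x => Ek x + Rk :=
      funext hdec
    rw [hfun]
    have h1 : Differentiable ℝ Ek := by
      rw [hEkdef]
      apply Differentiable.add
      · exact (diff_lse (A k)).const_mul _
      · apply Differentiable.const_mul
        apply Differentiable.add
        · exact Differentiable.fun_sum (fun l _ =>
            ((differentiable_id.sub_const (α l)).norm_sq ℝ).const_mul _)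
        · exact Differentiable.fun_sum (fun l _ =>
            (((differentiable_const (α l)).sub differentiable_id).norm_sq ℝ).const_mul _)
    exact (h1 (α k)).add_const Rk
  have hline : HasDerivAt (fun t : ℝ => α k + t • u) u 0 := by
    have h := ((hasDerivAt_id (0:ℝ)).smul_const u).const_add (α k)
    simpa using h
  have hchain : HasDerivAt (fun t : ℝ => fObj A c W μ₁ (Function.update α k (α k + t • u)))
      (⟪g, u⟫) 0 := by
    have hF : HasFDerivAt (fun x : Vec n => fObj A c W μ₁ (Function.update α k x))
        (InnerProductSpace.toDual ℝ (Vec n) g) ((fun t : ℝ => α k + t • u) 0) := by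
      have := hdiff.hasGradientAt.hasFDerivAt
      simp only [zero_smul, add_zero]; exact this
    have := hF.comp_hasDerivAt 0 hline
    simp only [InnerProductSpace.toDual_apply_apply] at this; exact this
  have hother : HasDerivAt (fun t : ℝ => fObj A c W μ₁ (Function.update α k (α k + t • u))) X 0 := by
    have hfun : (fun t : ℝ => fObj A c W μ₁ (Function.update α k (α k + t • u)))
        = fun t => Ek (α k + t • u) + Rk := funext (fun t => hdec _)
    rw [hfun]
    exact hEkDeriv.add_const Rk
  have hDeq : ⟪g, u⟫ = X := hchain.unique hother
  -- the gap identity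
  have hgap : blockGap β (α k) g = ⟪α k - s k, g⟫ := by
    apply IsGreatest.csSup_eq
    constructor
    · exact ⟨s k, hs k, rfl⟩
    · rintro v ⟨s', hs', rfl⟩
      have h := hargmin s' hs'
      simp only [inner_sub_left]
      linarith
  have hinner : ⟪g, u⟫ = - ⟪α k - s k, g⟫ := by
    rw [hu, real_inner_comm, show s k - α k = -(α k - s k) from (neg_sub _ _).symm,
      inner_neg_left]
  have hbgX : blockGap β (α k) g = - X := by
    rw [hgap]; linarith [hinner, hDeq]
  -- conclusion
  have hupdarg : (1 - γ) • α k + γ • s k = α k + γ • u := by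
    rw [hu, sub_smul, one_smul, smul_sub]; abel
  have hstart : fObj A c W μ₁ (Function.update α k ((1 - γ) • α k + γ • s k))
      = Ek (α k + γ • u) + Rk := by rw [hupdarg]; exact hdec _
  have hbase : Ek (α k) + Rk = fObj A c W μ₁ α := by
    have h := hdec (α k)
    rw [Function.update_eq_self] at h
    exact h.symm
  rw [hstart]
  have hrw : fObj A c W μ₁ α - γ * blockGap β (α k) g
      = (Ek (α k) + Rk) + γ * X := by
    rw [hbgX, ← hbase]; ring
  rw [hrw]
  linarith [hIneq]

/-- Averaged per-iteration decrease of decentralized Frank-Wolfe (eq. (expe)).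
If for each `k`, `s_k` minimizes `⟨s, ∇_k f(α)⟩` over the ℓ1 ball of radius `β` and
`α̂^(k)` is the corresponding blockwise Frank-Wolfe update, then
`(1/K) Σ_k f(α̂^(k)) ≤ f(α) − (γ/K)·gap(α) + γ²C⊗/(2K)` where `gap(α) = Σ_k gap_k(α)`
and `C⊗ = Σ_k 4β² d_k(w)(c_k ‖A_k‖₁² + μ₁)`. -/
theorem averaged_frank_wolfe_decrease
    (K n : ℕ) (hK : 1 ≤ K) (m : Fin K → ℕ)
    (A : ∀ k, Matrix (Fin (m k)) (Fin n) ℝ)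
    (c : Fin K → ℝ) (hc : ∀ k, 0 ≤ c k)
    (W : Fin K → Fin K → ℝ) (hWsym : ∀ k l, W k l = W l k)
    (hWnn : ∀ k l, k ≠ l → 0 ≤ W k l)
    (μ₁ : ℝ) (hμ₁ : 0 ≤ μ₁) (β : ℝ) (hβ : 0 < β)
    (γ : ℝ) (hγ0 : 0 ≤ γ) (hγ1 : γ ≤ 1)
    (α : Fin K → Vec n) (hα : ∀ j, l1Norm (α j) ≤ β)
    (s : Fin K → Vec n) (hs : ∀ k, l1Norm (s k) ≤ β)
    (hargmin : ∀ k, ∀ s' : Vec n, l1Norm s' ≤ β →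
      ⟪s k, gradBlk (fObj A c W μ₁) α k⟫ ≤ ⟪s', gradBlk (fObj A c W μ₁) α k⟫) :
    (1 / (K : ℝ)) *
        ∑ k, fObj A c W μ₁ (Function.update α k ((1 - γ) • α k + γ • s k))
      ≤ fObj A c W μ₁ α
        - γ / K * (∑ k, blockGap β (α k) (gradBlk (fObj A c W μ₁) α k))
        + γ ^ 2 * (∑ k, 4 * β ^ 2 * degW W k * (c k * rowNormOne (A k) ^ 2 + μ₁))
            / (2 * K) := by
  have hK0 : (0:ℝ) < K := by exact_mod_cast Nat.lt_of_lt_of_le Nat.zero_lt_one hK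
  have hkey : ∀ k : Fin K, fObj A c W μ₁ (Function.update α k ((1 - γ) • α k + γ • s k))
      ≤ fObj A c W μ₁ α - γ * blockGap β (α k) (gradBlk (fObj A c W μ₁) α k)
        + γ ^ 2 * (4 * β ^ 2 * degW W k * (c k * rowNormOne (A k) ^ 2 + μ₁)) / 2 :=
    fun k => key_block A c hc W hWsym hWnn μ₁ hμ₁ β hβ γ hγ0 α hα s hs k (hargmin k)
  have hsum : (∑ k, fObj A c W μ₁ (Function.update α k ((1 - γ) • α k + γ • s k)))
      ≤ ∑ k, (fObj A c W μ₁ α - γ * blockGap β (α k) (gradBlk (fObj A c W μ₁) α k)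
        + γ ^ 2 * (4 * β ^ 2 * degW W k * (c k * rowNormOne (A k) ^ 2 + μ₁)) / 2) :=
    Finset.sum_le_sum (fun k _ => hkey k)
  have hrhs : (∑ k, (fObj A c W μ₁ α - γ * blockGap β (α k) (gradBlk (fObj A c W μ₁) α k)
        + γ ^ 2 * (4 * β ^ 2 * degW W k * (c k * rowNormOne (A k) ^ 2 + μ₁)) / 2))
      = K * fObj A c W μ₁ α
        - γ * (∑ k, blockGap β (α k) (gradBlk (fObj A c W μ₁) α k))
        + γ ^ 2 * (∑ k, 4 * β ^ 2 * degW W k * (c k * rowNormOne (A k) ^ 2 + μ₁)) / 2 := by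
    rw [Finset.sum_add_distrib, Finset.sum_sub_distrib, Finset.sum_const, Finset.card_univ,
      Fintype.card_fin, ← Finset.mul_sum, nsmul_eq_mul, ← Finset.sum_div, ← Finset.mul_sum]
  calc (1 / (K:ℝ)) * ∑ k, fObj A c W μ₁ (Function.update α k ((1 - γ) • α k + γ • s k))
      ≤ (1 / (K:ℝ)) * (K * fObj A c W μ₁ α
          - γ * (∑ k, blockGap β (α k) (gradBlk (fObj A c W μ₁) α k))
          + γ ^ 2 * (∑ k, 4 * β ^ 2 * degW W k * (c k * rowNormOne (A k) ^ 2 + μ₁)) / 2) := by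
        apply mul_le_mul_of_nonneg_left _ (by positivity)
        rw [← hrhs]; exact hsum
    _ = _ := by
        field_simp
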